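/- Let 0 < ε ≤ r ≤ 1/2 and let R be a rectangle centered at distance about r from the origin o, whose radial width is at most 3ε, whose tangential length is at most √ε, and which contains the annular sector A of the circle c_o of radius r (as in the construction). Then every point of the homothetic copy R* of R scaled by factor 3 about its center lies at distance at most 5ε from the circle c_o of radius r centered at o. -/
import Mathlib


open Real

set_option maxHeartbeats 1000000 in
/-- Let 0 < ε ≤ r ≤ 1/2 and let R be the smallest enclosing rectangle of the annular
sector A = {u : r−ε ≤ |u| ≤ r+ε, angle in [−√ε/2, √ε/2]}, namely
R = [(r−ε)cos(√ε/2), r+ε] × [−(r+ε)sin(√ε/2), (r+ε)sin(√ε/2)].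
Then every point (x,y) of the homothetic copy R* of R scaled by factor 3 about its
center lies at distance at most 5ε from the circle of radius r centered at the
origin, i.e. |√(x²+y²) − r| ≤ 5ε. -/
theorem stmt7 (ε r x y : ℝ) (hε : 0 < ε) (her : ε ≤ r) (hr : r ≤ 1 / 2)
    (hx : |x - ((r - ε) * Real.cos (Real.sqrt ε / 2) + (r + ε)) / 2| ≤
      3 * (((r + ε) - (r - ε) * Real.cos (Real.sqrt ε / 2)) / 2))
    (hy : |y| ≤ 3 * ((r + ε) * Real.sin (Real.sqrt ε / 2))) :
    |Real.sqrt (x ^ 2 + y ^ 2) - r| ≤ 5 * ε := by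
  obtain ⟨t, ht⟩ : ∃ t : ℝ, t = Real.sqrt ε / 2 := ⟨_, rfl⟩
  rw [← ht] at hx hy
  have hsq : Real.sqrt ε ^ 2 = ε := Real.sq_sqrt hε.le
  have hs0' : 0 ≤ Real.sqrt ε := Real.sqrt_nonneg ε
  have hsle1 : Real.sqrt ε ≤ 1 := by
    nlinarith [hsq, hs0']
  have ht0 : 0 ≤ t := by rw [ht]; positivity
  have ht1 : t ≤ 1 / 2 := by rw [ht]; linarith
  have hc1 : Real.cos t ≤ 1 := Real.cos_le_one t
  have ht2 : t ^ 2 = ε / 4 := by rw [ht, div_pow, hsq]; norm_num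
  have hc2 : 1 - ε / 8 ≤ Real.cos t := by
    have h := Real.one_sub_sq_div_two_le_cos (x := t)
    rw [ht2] at h; linarith
  have hsin0 : 0 ≤ Real.sin t :=
    Real.sin_nonneg_of_nonneg_of_le_pi ht0 (by nlinarith [Real.pi_gt_three])
  have hsint : Real.sin t ≤ t := Real.sin_le ht0
  -- bound y²
  have hy2 : y ^ 2 ≤ 9 * (r + ε) ^ 2 * (ε / 4) := by
    have h1 : y ^ 2 ≤ (3 * ((r + ε) * Real.sin t)) ^ 2 := by
      have := sq_abs y
      nlinarith [hy, abs_nonneg y]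
    have h2 : Real.sin t ^ 2 ≤ ε / 4 := by nlinarith [hsint, hsin0, ht0, ht2]
    nlinarith [sq_nonneg (r + ε), h2, hsin0]
  -- bound x
  obtain ⟨hxl, hxu⟩ := abs_le.mp hx
  have hxu' : x ≤ r + 25 * ε / 8 := by nlinarith [hc1, hc2]
  have hxl' : r - 25 * ε / 8 ≤ x := by nlinarith [hc1, hc2]
  rw [abs_le]
  constructor
  · -- lower: r - 5ε ≤ √(x²+y²)
    have h1 : Real.sqrt (x ^ 2) ≤ Real.sqrt (x ^ 2 + y ^ 2) :=
      Real.sqrt_le_sqrt (by linarith [sq_nonneg y])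
    have h2 : Real.sqrt (x ^ 2) = |x| := Real.sqrt_sq_eq_abs x
    have h3 : x ≤ |x| := le_abs_self x
    linarith
  · -- upper
    have ha : (0:ℝ) ≤ r + 25 * ε / 8 - x := by linarith
    have hb : (0:ℝ) ≤ r + 25 * ε / 8 + x := by linarith
    have hA : x ^ 2 ≤ (r + 25 * ε / 8) ^ 2 := by nlinarith [mul_nonneg ha hb]
    have hB : (r + ε) ^ 2 ≤ 2 * r * (r + ε) := by nlinarith [her, hε.le]
    have hC : ε * (r + ε) ^ 2 ≤ ε * (2 * r * (r + ε)) :=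
      mul_le_mul_of_nonneg_left hB hε.le
    have h1 : x ^ 2 + y ^ 2 ≤ (r + 5 * ε) ^ 2 := by
      nlinarith [hA, hy2, hC, her, hr, hε.le,
        mul_nonneg (mul_nonneg hε.le hε.le) (by linarith : (0:ℝ) ≤ 1/2 - r),
        mul_nonneg (mul_nonneg hε.le (hε.le.trans her)) (by linarith : (0:ℝ) ≤ 1/2 - r)]
    have h2 : Real.sqrt (x ^ 2 + y ^ 2) ≤ r + 5 * ε := by
      calc Real.sqrt (x ^ 2 + y ^ 2) ≤ Real.sqrt ((r + 5 * ε) ^ 2) :=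
            Real.sqrt_le_sqrt h1
        _ = r + 5 * ε := Real.sqrt_sq (by linarith)
    linarith
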